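/- Let M be an n×n real matrix with spectral norm ‖M‖₂ ≤ 1. Then K = (1/2)(I_n − M) is a DPP kernel. -/

import Mathlib

open Matrix BigOperators Finset

lemma det_one_add_nonneg {n : ℕ} (A : Matrix (Fin n) (Fin n) ℝ)
    (hA : ∀ v : Fin n → ℝ, ‖(WithLp.equiv 2 (Fin n → ℝ)).symm (A.mulVec v)‖ ≤
      ‖(WithLp.equiv 2 (Fin n → ℝ)).symm v‖) :
    0 ≤ ((1 : Matrix (Fin n) (Fin n) ℝ) + A).det := by
  by_contra h
  push_neg at h
  set f : ℝ → ℝ := fun t => ((1 : Matrix (Fin n) (Fin n) ℝ) + t • A).det with hf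
  have hcont : Continuous f := by
    apply Continuous.matrix_det
    exact continuous_const.add (continuous_id.smul continuous_const)
  have h0 : f 0 = 1 := by simp [hf]
  have h1 : f 1 < 0 := by simpa [hf] using h
  have : (0 : ℝ) ∈ Set.Icc (f 1) (f 0) := ⟨h1.le, by rw [h0]; norm_num⟩
  obtain ⟨t, ht, hft⟩ := intermediate_value_Icc' (by norm_num : (0:ℝ) ≤ 1)
    hcont.continuousOn this
  obtain ⟨v, hv, hmv⟩ := (Matrix.exists_mulVec_eq_zero_iff).2 hft
  have hveq : (WithLp.equiv 2 (Fin n → ℝ)).symm v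
      = -(t • (WithLp.equiv 2 (Fin n → ℝ)).symm (A.mulVec v)) := by
    have h2 := hmv
    rw [Matrix.add_mulVec, Matrix.one_mulVec, Matrix.smul_mulVec] at h2
    have : v = -(t • A.mulVec v) := by linear_combination (norm := module) h2
    conv_lhs => rw [this]
    rfl
  have hnv : (0:ℝ) < ‖(WithLp.equiv 2 (Fin n → ℝ)).symm v‖ := by
    rw [norm_pos_iff]
    simpa using hv
  have hle : ‖(WithLp.equiv 2 (Fin n → ℝ)).symm v‖ ≤ t * ‖(WithLp.equiv 2 (Fin n → ℝ)).symm v‖ := by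
    calc ‖(WithLp.equiv 2 (Fin n → ℝ)).symm v‖
        = |t| * ‖(WithLp.equiv 2 (Fin n → ℝ)).symm (A.mulVec v)‖ := by
          rw [hveq, norm_neg, norm_smul]; rfl
      _ ≤ t * ‖(WithLp.equiv 2 (Fin n → ℝ)).symm v‖ := by
          rw [abs_of_nonneg ht.1]
          exact mul_le_mul_of_nonneg_left (hA v) ht.1
  have h1t : 1 ≤ t := by nlinarith
  have : t = 1 := le_antisymm ht.2 h1t
  rw [this] at hft
  linarith

/-- The indicator vector of the subset `S`. -/
def indVec {n : ℕ} (S : Finset (Fin n)) : Fin n → ℝ := fun i => if i ∈ S then 1 else 0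

/-- `K` is a DPP kernel: each value `P(X = Sᶜ) = det(D(1_{Sᶜ})(I-K) + D(1_S)K)` is
nonnegative, i.e. `K` defines a determinantal point process. -/
def IsDPPKernel {n : ℕ} (K : Matrix (Fin n) (Fin n) ℝ) : Prop :=
  ∀ S : Finset (Fin n),
    0 ≤ (Matrix.diagonal (indVec Sᶜ) * (1 - K) + Matrix.diagonal (indVec S) * K).det

theorem half_identity_perturbation_isDPPKernel {n : ℕ} (M : Matrix (Fin n) (Fin n) ℝ)
    (hM : ‖Matrix.toEuclideanCLM (𝕜 := ℝ) M‖ ≤ 1) :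
    IsDPPKernel ((1 / 2 : ℝ) • ((1 : Matrix (Fin n) (Fin n) ℝ) - M)) := by
  intro S
  set ε : Fin n → ℝ := fun i => if i ∈ S then -1 else 1 with hε
  have key : Matrix.diagonal (indVec Sᶜ) * (1 - (1 / 2 : ℝ) • ((1 : Matrix (Fin n) (Fin n) ℝ) - M))
      + Matrix.diagonal (indVec S) * ((1 / 2 : ℝ) • ((1 : Matrix (Fin n) (Fin n) ℝ) - M))
      = (1 / 2 : ℝ) • ((1 : Matrix (Fin n) (Fin n) ℝ) + Matrix.diagonal ε * M) := by
    ext i j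
    by_cases h : i ∈ S <;>
      simp [Matrix.diagonal_mul, indVec, hε, h, Matrix.one_apply, Matrix.sub_apply,
        Matrix.smul_apply, Matrix.add_apply] <;>
      by_cases hij : i = j <;> simp [hij] <;> ring
  rw [key, Matrix.det_smul]
  apply mul_nonneg (by positivity)
  apply det_one_add_nonneg
  intro v
  rw [← Matrix.mulVec_mulVec]
  have hDε : ‖(WithLp.equiv 2 (Fin n → ℝ)).symm ((Matrix.diagonal ε).mulVec (M.mulVec v))‖
      = ‖(WithLp.equiv 2 (Fin n → ℝ)).symm (M.mulVec v)‖ := by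
    rw [EuclideanSpace.norm_eq, EuclideanSpace.norm_eq]
    congr 1
    apply Finset.sum_congr rfl
    intro i _
    have : ((WithLp.equiv 2 (Fin n → ℝ)).symm ((Matrix.diagonal ε).mulVec (M.mulVec v))) i
        = ε i * (M.mulVec v) i := Matrix.mulVec_diagonal ε (M.mulVec v) i
    rw [this]
    by_cases h : i ∈ S <;> simp [hε, h, abs_mul]
  rw [hDε]
  calc ‖(WithLp.equiv 2 (Fin n → ℝ)).symm (M.mulVec v)‖
      = ‖Matrix.toEuclideanCLM (𝕜 := ℝ) M ((WithLp.equiv 2 (Fin n → ℝ)).symm v)‖ := by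
        rfl
    _ ≤ ‖Matrix.toEuclideanCLM (𝕜 := ℝ) M‖ * ‖(WithLp.equiv 2 (Fin n → ℝ)).symm v‖ :=
        (Matrix.toEuclideanCLM (𝕜 := ℝ) M).le_opNorm _
    _ ≤ 1 * ‖(WithLp.equiv 2 (Fin n → ℝ)).symm v‖ :=
        mul_le_mul_of_nonneg_right hM (norm_nonneg _)
    _ = _ := one_mul _
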